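/- arXiv:math/0609294 — 2 statements merged into one kernel-verified Lean document; each statement's English description precedes it below -/
import Mathlib

section
/- The log-normal distribution is not determined by its moments: there exists a probability density on (0,∞), distinct from the standard log-normal density f(x) = (1/(x√(2π))) exp(−(log x)²/2), having the same moments of all orders. Concretely, for every a with |a| ≤ 1, the function f_a(x) = f(x)(1 + a sin(2π log x)) is a probability density on (0,∞) whose n-th moment equals that of f for every nonnegative integer n. -/
open MeasureTheory Real Set

/-- The standard log-normal density on `(0, ∞)`. -/
noncomputable def logNormalDensity (x : ℝ) : ℝ :=
  (1 / (x * Real.sqrt (2 * Real.pi))) * Real.exp (-(Real.log x) ^ 2 / 2)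

/-- The perturbed density `f_a(x) = f(x)(1 + a sin(2π log x))`. -/
noncomputable def perturbedDensity (a x : ℝ) : ℝ :=
  logNormalDensity x * (1 + a * Real.sin (2 * Real.pi * Real.log x))

lemma log_subst (g : ℝ → ℝ) : ∫ x in Ioi (0:ℝ), g (Real.log x) / x = ∫ t : ℝ, g t := by
  have h := integral_image_eq_integral_abs_deriv_smul (s := (univ : Set ℝ))
    (f := Real.exp) (f' := Real.exp) MeasurableSet.univ
    (fun x _ => (Real.hasDerivAt_exp x).hasDerivWithinAt) Real.exp_injective.injOn
    (fun x => g (Real.log x) / x)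
  rw [image_univ, Real.range_exp] at h
  rw [h, setIntegral_univ]
  congr 1
  funext t
  rw [Real.log_exp, abs_of_pos (Real.exp_pos t), smul_eq_mul,
    mul_div_cancel₀ _ (Real.exp_pos t).ne']

lemma exp_sq_rw (n : ℝ) : (fun t : ℝ => Real.exp (n*t - t^2/2))
    = fun t => Real.exp (n^2/2) * Real.exp (-(1/2) * (t - n)^2) := by
  funext t
  rw [← Real.exp_add]
  ring_nf

lemma int1 (n : ℝ) : Integrable (fun t : ℝ => Real.exp (n*t - t^2/2)) := by
  rw [exp_sq_rw]
  exact ((integrable_exp_neg_mul_sq (by norm_num : (0:ℝ) < 1/2)).comp_sub_right n).const_mul _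

lemma int2 (n : ℝ) :
    Integrable (fun t : ℝ => Real.exp (n*t - t^2/2) * Real.sin (2*Real.pi*t)) := by
  apply Integrable.mono' (g := fun t : ℝ => Real.exp (n*t - t^2/2)) (int1 n)
  · exact ((Real.continuous_exp.comp (by continuity)).mul
      (Real.continuous_sin.comp (by continuity))).aestronglyMeasurable
  · filter_upwards with t
    rw [norm_mul, Real.norm_eq_abs, Real.norm_eq_abs, abs_of_pos (Real.exp_pos _)]
    calc Real.exp (n*t - t^2/2) * |Real.sin (2*Real.pi*t)|
        ≤ Real.exp (n*t - t^2/2) * 1 :=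
          mul_le_mul_of_nonneg_left (Real.abs_sin_le_one _) (Real.exp_pos _).le
      _ = _ := mul_one _

lemma J (n : ℕ) : ∫ t : ℝ, Real.exp ((n:ℝ)*t - t^2/2) * Real.sin (2*Real.pi*t) = 0 := by
  have hodd : ∫ t : ℝ, Real.exp (-(1/2) * t^2) * Real.sin (2*Real.pi*t) = 0 := by
    have h := integral_neg_eq_self
      (fun t : ℝ => Real.exp (-(1/2) * t^2) * Real.sin (2*Real.pi*t)) volume
    simp only [mul_neg, neg_sq, Real.sin_neg, mul_neg] at h
    rw [integral_neg] at h
    linarith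
  have hshift : ∫ t : ℝ, Real.exp (-(1/2) * (t - n)^2) * Real.sin (2*Real.pi*t) = 0 := by
    rw [← integral_add_right_eq_self
      (fun t : ℝ => Real.exp (-(1/2) * (t - n)^2) * Real.sin (2*Real.pi*t)) (n:ℝ)]
    simp only [add_sub_cancel_right]
    have : ∀ t : ℝ, Real.sin (2*Real.pi*(t + n)) = Real.sin (2*Real.pi*t) := by
      intro t
      have h2 : 2*Real.pi*(t + n) = 2*Real.pi*t + n * (2*Real.pi) := by ring
      rw [h2, Real.sin_add_nat_mul_two_pi]
    simp_rw [this]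
    exact hodd
  calc ∫ t : ℝ, Real.exp ((n:ℝ)*t - t^2/2) * Real.sin (2*Real.pi*t)
      = ∫ t : ℝ, Real.exp ((n:ℝ)^2/2) *
          (Real.exp (-(1/2) * (t - n)^2) * Real.sin (2*Real.pi*t)) := by
        congr 1; funext t
        rw [← mul_assoc, ← congrFun (exp_sq_rw (n:ℝ)) t]
    _ = Real.exp ((n:ℝ)^2/2) * ∫ t : ℝ, Real.exp (-(1/2) * (t - n)^2) * Real.sin (2*Real.pi*t) :=
        MeasureTheory.integral_const_mul _ _
    _ = 0 := by rw [hshift, mul_zero]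

lemma eqOn_perturbed (a : ℝ) (n : ℕ) :
    EqOn (fun x => x ^ n * perturbedDensity a x)
      (fun x => (fun t => Real.exp ((n:ℝ)*t - t^2/2) * (1 + a * Real.sin (2*Real.pi*t))
        / Real.sqrt (2*Real.pi)) (Real.log x) / x) (Ioi 0) := by
  intro x hx
  have hx0 : (0:ℝ) < x := hx
  simp only [perturbedDensity, logNormalDensity]
  have hxn : Real.exp ((n:ℝ) * Real.log x) = x ^ n := by
    rw [Real.exp_nat_mul, Real.exp_log hx0]
  have hsplit : Real.exp ((n:ℝ)*Real.log x - (Real.log x)^2/2)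
      = x ^ n * Real.exp (-(Real.log x)^2/2) := by
    rw [show (n:ℝ)*Real.log x - (Real.log x)^2/2 = (n:ℝ)*Real.log x + (-(Real.log x)^2/2) by ring,
      Real.exp_add, hxn]
  rw [hsplit]
  have hs : (0:ℝ) < Real.sqrt (2*Real.pi) := Real.sqrt_pos.mpr (by positivity)
  field_simp

lemma moment_eq (a : ℝ) (n : ℕ) :
    ∫ x in Ioi (0:ℝ), x ^ n * perturbedDensity a x
      = (∫ t : ℝ, Real.exp ((n:ℝ)*t - t^2/2)) / Real.sqrt (2*Real.pi) := by
  rw [setIntegral_congr_fun measurableSet_Ioi (eqOn_perturbed a n),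
    log_subst (fun t => Real.exp ((n:ℝ)*t - t^2/2) * (1 + a * Real.sin (2*Real.pi*t))
      / Real.sqrt (2*Real.pi))]
  have expand : (fun t => Real.exp ((n:ℝ)*t - t^2/2) * (1 + a * Real.sin (2*Real.pi*t))
        / Real.sqrt (2*Real.pi))
      = fun t => (Real.sqrt (2*Real.pi))⁻¹ * Real.exp ((n:ℝ)*t - t^2/2)
        + (a * (Real.sqrt (2*Real.pi))⁻¹) *
          (Real.exp ((n:ℝ)*t - t^2/2) * Real.sin (2*Real.pi*t)) := by
    funext t; field_simp
  rw [expand, integral_add ((int1 _).const_mul _) ((int2 _).const_mul _),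
    MeasureTheory.integral_const_mul, MeasureTheory.integral_const_mul, J, mul_zero, add_zero,
    inv_mul_eq_div]

lemma gauss_one : (∫ t : ℝ, Real.exp ((0:ℝ)*t - t^2/2)) / Real.sqrt (2*Real.pi) = 1 := by
  have h : (fun t : ℝ => Real.exp ((0:ℝ)*t - t^2/2)) = fun t => Real.exp (-(1/2) * t^2) := by
    funext t; ring_nf
  rw [h, integral_gaussian]
  rw [show Real.pi / (1/2) = 2 * Real.pi by ring]
  exact div_self (Real.sqrt_pos.mpr (by positivity)).ne'

/-- The log-normal distribution is not determined by its moments: every `f_a` with `|a| ≤ 1`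
is a probability density on `(0,∞)` with the same moments of all orders as `f`, and for some
`a` the density `f_a` differs from `f`. -/
theorem lognormal_not_determined_by_moments :
    (∀ a : ℝ, |a| ≤ 1 →
      (∀ x ∈ Ioi (0 : ℝ), 0 ≤ perturbedDensity a x) ∧
      (∫ x in Ioi (0 : ℝ), perturbedDensity a x = 1) ∧
      (∀ n : ℕ, ∫ x in Ioi (0 : ℝ), x ^ n * perturbedDensity a x
        = ∫ x in Ioi (0 : ℝ), x ^ n * logNormalDensity x)) ∧
    (∃ a : ℝ, |a| ≤ 1 ∧ ∃ x ∈ Ioi (0 : ℝ), perturbedDensity a x ≠ logNormalDensity x) := by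
  have hlogn : ∀ n : ℕ, (fun x : ℝ => x ^ n * logNormalDensity x)
      = fun x => x ^ n * perturbedDensity 0 x := by
    intro n; funext x; simp [perturbedDensity]
  constructor
  · intro a ha
    refine ⟨?_, ?_, ?_⟩
    · intro x hx
      have hx0 : (0:ℝ) < x := hx
      have hf : 0 ≤ logNormalDensity x := by
        unfold logNormalDensity
        have : (0:ℝ) ≤ Real.sqrt (2*Real.pi) := Real.sqrt_nonneg _
        positivity
      apply mul_nonneg hf
      have h1 : |a * Real.sin (2 * Real.pi * Real.log x)| ≤ 1 := by
        rw [abs_mul]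
        calc |a| * |Real.sin (2 * Real.pi * Real.log x)| ≤ 1 * 1 :=
          mul_le_mul ha (Real.abs_sin_le_one _) (abs_nonneg _) zero_le_one
        _ = 1 := mul_one 1
      linarith [neg_abs_le (a * Real.sin (2 * Real.pi * Real.log x))]
    · have h := moment_eq a 0
      simp only [pow_zero, one_mul, Nat.cast_zero] at h
      rw [h, gauss_one]
    · intro n
      rw [moment_eq a n, hlogn n, moment_eq 0 n]
  · refine ⟨1, by norm_num, Real.exp (1/4), Real.exp_pos _, ?_⟩
    have hlog : Real.log (Real.exp (1/4)) = 1/4 := Real.log_exp _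
    have hsin : Real.sin (2 * Real.pi * Real.log (Real.exp (1/4))) = 1 := by
      rw [hlog, show 2 * Real.pi * (1/4) = Real.pi / 2 by ring, Real.sin_pi_div_two]
    have hfpos : 0 < logNormalDensity (Real.exp (1/4)) := by
      unfold logNormalDensity
      have h2 : (0:ℝ) < Real.sqrt (2*Real.pi) := Real.sqrt_pos.mpr (by positivity)
      have h3 : (0:ℝ) < Real.exp (1/4) := Real.exp_pos _
      positivity
    unfold perturbedDensity
    rw [hsin]
    intro hcontra
    nlinarith
end

section
/- For every nonnegative integer n and real a with |a| ≤ 1, ∫₀^∞ xⁿ f(x) a sin(2π log x) dx = 0, where f is the standard log-normal density; hence all perturbed densities f(x)(1 + a sin(2π log x)) share the same moment sequence as f. -/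
open MeasureTheory Real Set

/-- The centered Gaussian-times-sine integral vanishes by oddness. -/
lemma gaussian_sin_integral_zero :
    ∫ t : ℝ, Real.exp (-t ^ 2 / 2) * Real.sin (2 * Real.pi * t) = 0 := by
  set f : ℝ → ℝ := fun t => Real.exp (-t ^ 2 / 2) * Real.sin (2 * Real.pi * t) with hf
  have hodd : ∀ t, f (-t) = -f t := by
    intro t
    simp only [hf]
    rw [mul_neg, Real.sin_neg]
    ring_nf
  have h := integral_neg_eq_self f (volume : Measure ℝ)
  have h2 : ∫ t, f (-t) = ∫ t, -f t := by
    congr 1; ext t; exact hodd t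
  rw [h2, integral_neg] at h
  linarith

/-- Shifted Gaussian-times-sine integral (shift by a natural number) vanishes. -/
lemma gaussian_sin_integral_shift_zero (n : ℕ) :
    ∫ t : ℝ, Real.exp (-(t - (n : ℝ)) ^ 2 / 2) * Real.sin (2 * Real.pi * t) = 0 := by
  have h := integral_add_right_eq_self
    (μ := (volume : Measure ℝ))
    (fun t : ℝ => Real.exp (-(t - (n : ℝ)) ^ 2 / 2) * Real.sin (2 * Real.pi * t)) (n : ℝ)
  rw [← h]
  have heq : ∀ t : ℝ, Real.exp (-(t + (n : ℝ) - (n : ℝ)) ^ 2 / 2) *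
      Real.sin (2 * Real.pi * (t + (n : ℝ)))
      = Real.exp (-t ^ 2 / 2) * Real.sin (2 * Real.pi * t) := by
    intro t
    have h1 : (2 : ℝ) * Real.pi * (t + (n : ℝ)) = 2 * Real.pi * t + (n : ℤ) * (2 * Real.pi) := by
      push_cast; ring
    rw [h1, Real.sin_add_int_mul_two_pi]
    ring_nf
  calc ∫ t : ℝ, Real.exp (-(t + (n : ℝ) - (n : ℝ)) ^ 2 / 2) *
          Real.sin (2 * Real.pi * (t + (n : ℝ)))
      = ∫ t : ℝ, Real.exp (-t ^ 2 / 2) * Real.sin (2 * Real.pi * t) := by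
        congr 1; ext t; exact heq t
    _ = 0 := gaussian_sin_integral_zero

/-- For every `n` and `|a| ≤ 1`, the perturbation `a sin(2π log x)` contributes nothing to the
`n`-th moment: `∫₀^∞ xⁿ f(x) a sin(2π log x) dx = 0`. -/
theorem lognormal_perturbation_moments_vanish (n : ℕ) (a : ℝ) (ha : |a| ≤ 1) :
    ∫ x in Ioi (0 : ℝ),
      x ^ n * (logNormalDensity x * (a * Real.sin (2 * Real.pi * Real.log x))) = 0 := by
  have himg : Ioi (0 : ℝ) = Real.exp '' Set.univ := by
    rw [Set.image_univ, Real.range_exp]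
  rw [himg, integral_image_eq_integral_abs_deriv_smul MeasurableSet.univ
      (fun x _ => (Real.hasDerivAt_exp x).hasDerivWithinAt) Real.exp_injective.injOn,
    Measure.restrict_univ]
  have h1 : ∀ t : ℝ, |Real.exp t| • (Real.exp t ^ n *
      (logNormalDensity (Real.exp t) * (a * Real.sin (2 * Real.pi * Real.log (Real.exp t)))))
      = a / Real.sqrt (2 * Real.pi) * (Real.exp ((n : ℝ) ^ 2 / 2) *
        (Real.exp (-(t - (n : ℝ)) ^ 2 / 2) * Real.sin (2 * Real.pi * t))) := by
    intro t
    rw [abs_of_pos (Real.exp_pos t), smul_eq_mul, Real.log_exp]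
    unfold logNormalDensity
    rw [Real.log_exp]
    have e1 : Real.exp t ^ n = Real.exp ((n : ℝ) * t) := by
      rw [← Real.exp_nat_mul]
    have e2 : Real.exp ((n : ℝ) * t) * Real.exp (-t ^ 2 / 2)
        = Real.exp ((n : ℝ) ^ 2 / 2) * Real.exp (-(t - (n : ℝ)) ^ 2 / 2) := by
      rw [← Real.exp_add, ← Real.exp_add]
      congr 1
      ring
    rw [e1]
    have hs : Real.sqrt (2 * Real.pi) ≠ 0 :=
      ne_of_gt (Real.sqrt_pos.mpr (by positivity))
    have he : Real.exp t ≠ 0 := Real.exp_ne_zero t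
    field_simp
    linear_combination (norm := ring_nf)
      (a * Real.sin (2 * Real.pi * t)) * e2
  calc ∫ t : ℝ, |Real.exp t| • (Real.exp t ^ n *
        (logNormalDensity (Real.exp t) * (a * Real.sin (2 * Real.pi * Real.log (Real.exp t)))))
      = ∫ t : ℝ, a / Real.sqrt (2 * Real.pi) * (Real.exp ((n : ℝ) ^ 2 / 2) *
          (Real.exp (-(t - (n : ℝ)) ^ 2 / 2) * Real.sin (2 * Real.pi * t))) := by
        congr 1; ext t; exact h1 t
    _ = a / Real.sqrt (2 * Real.pi) * (Real.exp ((n : ℝ) ^ 2 / 2) *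
          ∫ t : ℝ, Real.exp (-(t - (n : ℝ)) ^ 2 / 2) * Real.sin (2 * Real.pi * t)) := by
        rw [integral_const_mul, integral_const_mul]
    _ = 0 := by rw [gaussian_sin_integral_shift_zero]; ring
end
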